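/- arXiv:1803.00180 — 2 statements merged into one kernel-verified Lean document; each statement's English description precedes it below -/
import Mathlib

section
/- In an elementary topos, the singleton map {·}_a : a → Ω^a, defined as the exponential transpose of the classifying map δ_a of the diagonal Δ_a = ⟨id_a, id_a⟩ : a → a × a, is a monomorphism. -/
open CategoryTheory CategoryTheory.Limits CategoryTheory.MonoidalCategory CategoryTheory.CartesianMonoidalCategory

/-- In an elementary topos, the singleton map `{·}_a : a ⟶ Ω^a`, the exponential
transpose of the classifying map of the diagonal, is a monomorphism. -/
theorem stmt_15 {E : Type*} [Category E] [HasFiniteLimits E] [CartesianMonoidalCategory E]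
    [MonoidalClosed E] [HasFiniteColimits E]
    (Ω : E) (t : 𝟙_ E ⟶ Ω)
    (classify : ∀ {x y : E} (m : x ⟶ y), Mono m →
      ∃! χ : y ⟶ Ω, IsPullback (toUnit x) m t χ)
    (a : E) (δ : a ⊗ a ⟶ Ω)
    (hδ : IsPullback (toUnit a) (lift (𝟙 a) (𝟙 a)) t δ) :
    Mono (MonoidalClosed.curry δ) := by
  constructor
  intro x f g h
  have h' : a ◁ f ≫ δ = a ◁ g ≫ δ := by
    have := congrArg MonoidalClosed.uncurry h
    rwa [MonoidalClosed.uncurry_natural_left, MonoidalClosed.uncurry_natural_left,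
      MonoidalClosed.uncurry_curry] at this
  -- key: lift f g ≫ δ = toUnit x ≫ t
  have key : lift f g ≫ δ = toUnit x ≫ t := by
    have h1 : lift f (𝟙 x) ≫ a ◁ f = f ≫ lift (𝟙 a) (𝟙 a) := by
      apply CartesianMonoidalCategory.hom_ext <;> simp
    have h2 : lift f (𝟙 x) ≫ a ◁ g = lift f g := by
      apply CartesianMonoidalCategory.hom_ext <;> simp
    calc lift f g ≫ δ = lift f (𝟙 x) ≫ a ◁ g ≫ δ := by rw [← Category.assoc, h2]
      _ = lift f (𝟙 x) ≫ a ◁ f ≫ δ := by rw [h']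
      _ = f ≫ lift (𝟙 a) (𝟙 a) ≫ δ := by rw [← Category.assoc, h1, Category.assoc]
      _ = f ≫ toUnit a ≫ t := by rw [← hδ.w]
      _ = toUnit x ≫ t := by rw [← Category.assoc, toUnit_unique (f ≫ toUnit a) (toUnit x)]
  set u := hδ.lift (toUnit x) (lift f g) key.symm with hu_def
  have hu : u ≫ lift (𝟙 a) (𝟙 a) = lift f g := hδ.lift_snd (toUnit x) (lift f g) key.symm
  have hf : u = f := by
    have := congrArg (· ≫ fst a a) hu
    simpa using this
  have hg : u = g := by
    have := congrArg (· ≫ snd a a) hu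
    simpa using this
  rw [← hf, ← hg]
end

section
/- For any object b of an elementary topos E, the slice category E/b is cartesian closed; consequently E/b is itself an elementary topos, with terminal object id_b, subobject classifier given by the projection Ω × b → b with classifying point ⟨δ_b ∘ Δ_b, id_b⟩ : b → Ω × b over b. -/
set_option linter.unusedSectionVars false
set_option maxHeartbeats 1000000

open CategoryTheory CategoryTheory.Limits CategoryTheory.MonoidalCategory CategoryTheory.CartesianMonoidalCategory

noncomputable section
namespace ToposSlice

universe v u
variable {E : Type u} [Category.{v} E]

/-- Generic construction of `IsPullback` from an explicit universal property. -/
lemma mk_isPullback {D C X Y : E} {f : D ⟶ C} {d : D ⟶ X} {h : C ⟶ Y} {i : X ⟶ Y}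
    (comm : f ≫ h = d ≫ i)
    (hl : ∀ {Z : E} (a : Z ⟶ C) (bx : Z ⟶ X), a ≫ h = bx ≫ i →
      ∃! w : Z ⟶ D, w ≫ f = a ∧ w ≫ d = bx) :
    IsPullback f d h i := by
  refine IsPullback.of_isLimit' ⟨comm⟩ ?_
  refine PullbackCone.IsLimit.mk comm (fun s => (hl s.fst s.snd s.condition).exists.choose)
    (fun s => (hl s.fst s.snd s.condition).exists.choose_spec.1)
    (fun s => (hl s.fst s.snd s.condition).exists.choose_spec.2)
    (fun s m h1 h2 => ?_)
  exact ((hl s.fst s.snd s.condition).unique ⟨h1, h2⟩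
    (hl s.fst s.snd s.condition).exists.choose_spec)


section Classifier
variable [HasFiniteLimits E] [CartesianMonoidalCategory E]

variable {Ω : E} (t : 𝟙_ E ⟶ Ω)

/-- The "true" arrow at stage `X`. -/
def tru (X : E) : X ⟶ Ω := toUnit X ≫ t

@[simp] lemma comp_tru {Z' Z : E} (z : Z' ⟶ Z) : z ≫ tru t Z = tru t Z' := by
  simp [tru, ← Category.assoc]

lemma mono_t : Mono t := by
  haveI : IsSplitMono t := IsSplitMono.mk' ⟨toUnit Ω, toUnit_unique _ _⟩
  infer_instance

variable (classify : ∀ {x y : E} (m : x ⟶ y), Mono m →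
      ∃! χ : y ⟶ Ω, IsPullback (toUnit x) m t χ)

/-- Classifying map of a mono. -/
def cls {S X : E} (m : S ⟶ X) (hm : Mono m) : X ⟶ Ω :=
  (classify m hm).exists.choose

lemma cls_spec {S X : E} (m : S ⟶ X) (hm : Mono m) :
    IsPullback (toUnit S) m t (cls t classify m hm) :=
  (classify m hm).exists.choose_spec

lemma cls_unique {S X : E} (m : S ⟶ X) (hm : Mono m) {χ : X ⟶ Ω}
    (h : IsPullback (toUnit S) m t χ) : χ = cls t classify m hm :=
  (classify m hm).unique h (cls_spec t classify m hm)

/-- Membership: a generalized element satisfies the classifying map iff it factors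
through the subobject. -/
lemma mem_iff {S X : E} {m : S ⟶ X} {χ : X ⟶ Ω} (h : IsPullback (toUnit S) m t χ)
    {Z : E} (v : Z ⟶ X) : v ≫ χ = tru t Z ↔ ∃ w : Z ⟶ S, w ≫ m = v := by
  constructor
  · intro hv
    refine ⟨h.lift (toUnit Z) v ?_, h.lift_snd _ _ _⟩
    simpa [tru] using hv.symm
  · rintro ⟨w, rfl⟩
    rw [Category.assoc, ← h.w, ← Category.assoc]
    simp [tru, ← Category.assoc]

include classify in
/-- Extensionality for maps into `Ω`. -/
lemma omega_ext {X : E} {χ χ' : X ⟶ Ω}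
    (h : ∀ {Z : E} (v : Z ⟶ X), v ≫ χ = tru t Z ↔ v ≫ χ' = tru t Z) : χ = χ' := by
  haveI : Mono t := mono_t t
  have hP : IsPullback (toUnit (pullback t χ)) (pullback.snd t χ) t χ := by
    have := IsPullback.of_hasPullback t χ
    rwa [show pullback.fst t χ = toUnit _ from toUnit_unique _ _] at this
  haveI hm : Mono (pullback.snd t χ) := inferInstance
  have hP' : IsPullback (toUnit (pullback t χ)) (pullback.snd t χ) t χ' := by
    refine mk_isPullback ?_ ?_
    · have : pullback.snd t χ ≫ χ' = tru t _ :=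
        (h _).mp ((mem_iff t hP _).mpr ⟨𝟙 _, Category.id_comp _⟩)
      rw [this]; rfl
    · intro Z a bx hab
      have hsat : bx ≫ χ = tru t Z := by
        refine (h bx).mpr ?_
        rw [← hab, show a = toUnit Z from toUnit_unique _ _]; rfl
      obtain ⟨w, hw⟩ := (mem_iff t hP bx).mp hsat
      exact ⟨w, ⟨toUnit_unique _ _, hw⟩, fun y hy => by
        apply (cancel_mono (pullback.snd t χ)).mp; rw [hy.2, hw]⟩
  exact (classify (pullback.snd t χ) hm).unique hP hP'

section Predicates

/-- Internal equality predicate. -/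
def eqP (C : E) : C ⊗ C ⟶ Ω :=
  cls t classify (lift (𝟙 C) (𝟙 C)) inferInstance

lemma eqP_iff {C Z : E} (u v : Z ⟶ C) :
    lift u v ≫ eqP t classify C = tru t Z ↔ u = v := by
  rw [eqP, mem_iff t (cls_spec t classify _ _)]
  constructor
  · rintro ⟨w, hw⟩
    have h1 : w ≫ lift (𝟙 C) (𝟙 C) ≫ fst _ _ = lift u v ≫ fst _ _ := by
      rw [← Category.assoc, hw]
    have h2 : w ≫ lift (𝟙 C) (𝟙 C) ≫ snd _ _ = lift u v ≫ snd _ _ := by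
      rw [← Category.assoc, hw]
    simp at h1 h2; rw [← h1, ← h2]
  · rintro rfl
    exact ⟨u, by simp [comp_lift]⟩

lemma mono_lifttt : Mono (lift t t) := by
  haveI : IsSplitMono (lift t t) := IsSplitMono.mk' ⟨toUnit _, toUnit_unique _ _⟩
  infer_instance

/-- Internal conjunction. -/
def andP : Ω ⊗ Ω ⟶ Ω :=
  cls t classify (lift t t) (mono_lifttt t)

lemma andP_iff {Z : E} (p q : Z ⟶ Ω) :
    lift p q ≫ andP t classify = tru t Z ↔ (p = tru t Z ∧ q = tru t Z) := by
  rw [andP, mem_iff t (cls_spec t classify _ _)]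
  constructor
  · rintro ⟨w, hw⟩
    have hwu : w = toUnit Z := toUnit_unique _ _
    subst hwu
    have h1 : toUnit Z ≫ lift t t ≫ fst _ _ = lift p q ≫ fst _ _ := by
      rw [← Category.assoc, hw]
    have h2 : toUnit Z ≫ lift t t ≫ snd _ _ = lift p q ≫ snd _ _ := by
      rw [← Category.assoc, hw]
    simp at h1 h2
    exact ⟨h1.symm, h2.symm⟩
  · rintro ⟨rfl, rfl⟩
    exact ⟨toUnit Z, by simp [comp_lift, tru]⟩

end Predicates


section PMC
variable [MonoidalClosed E]
open CartesianClosed MonoidalClosed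

lemma lift_whisker {Z C X X' : E} (c : Z ⟶ C) (x : Z ⟶ X) (f : X ⟶ X') :
    lift c x ≫ (C ◁ f) = lift c (x ≫ f) := by
  apply CartesianMonoidalCategory.hom_ext <;> simp

/-- Rule R1: naturality of evaluation. -/
lemma lift_uncurry_comp {Z C X X' Y : E} (c : Z ⟶ C) (x : Z ⟶ X) (f : X ⟶ X')
    (s : X' ⟶ C ⟹ Y) :
    lift c x ≫ uncurry (f ≫ s) = lift c (x ≫ f) ≫ uncurry s := by
  rw [uncurry_natural_left, ← Category.assoc, lift_whisker]

/-- Rule R1': moving a map into the exponential variable. -/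
lemma lift_uncurry {Z C X Y : E} (c : Z ⟶ C) (x : Z ⟶ X) (s : X ⟶ C ⟹ Y) :
    lift c x ≫ uncurry s = lift c (x ≫ s) ≫ uncurry (𝟙 (C ⟹ Y)) := by
  have := lift_uncurry_comp c x s (𝟙 (C ⟹ Y))
  rwa [Category.comp_id] at this

variable (C : E)

/-- `((c,c'),s) ↦ s(c) ∧ s(c')`. -/
def F1 : (C ⊗ C) ⊗ (C ⟹ Ω) ⟶ Ω :=
  lift (lift (fst _ _ ≫ fst _ _) (snd _ _) ≫ uncurry (𝟙 _))
       (lift (fst _ _ ≫ snd _ _) (snd _ _) ≫ uncurry (𝟙 _)) ≫ andP t classify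

/-- `((c,c'),s) ↦ (s(c) ∧ s(c')) ∧ c = c'`. -/
def F2 : (C ⊗ C) ⊗ (C ⟹ Ω) ⟶ Ω :=
  lift (F1 t classify C) (fst _ _ ≫ eqP t classify C) ≫ andP t classify

def sgm : (C ⟹ Ω) ⟶ ((C ⊗ C) ⟹ Ω) := curry (F1 t classify C)
def tau : (C ⟹ Ω) ⟶ ((C ⊗ C) ⟹ Ω) := curry (F2 t classify C)

lemma lift_F1 {Z : E} (c c' : Z ⟶ C) (s : Z ⟶ C ⟹ Ω) :
    lift (lift c c') s ≫ F1 t classify C =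
      lift (lift c s ≫ uncurry (𝟙 _)) (lift c' s ≫ uncurry (𝟙 _)) ≫ andP t classify := by
  rw [F1, ← Category.assoc]
  congr 1
  rw [comp_lift]
  congr 1 <;> rw [← Category.assoc, comp_lift] <;> simp

lemma lift_F2 {Z : E} (c c' : Z ⟶ C) (s : Z ⟶ C ⟹ Ω) :
    lift (lift c c') s ≫ F2 t classify C =
      lift (lift (lift c c') s ≫ F1 t classify C) (lift c c' ≫ eqP t classify C)
        ≫ andP t classify := by
  rw [F2, ← Category.assoc, comp_lift]
  congr 2
  rw [← Category.assoc]; simp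

/-- Single-valuedness of (the relation underlying) `s : X ⟶ C ⟹ Ω`. -/
def SV {X : E} (s : X ⟶ C ⟹ Ω) : Prop :=
  ∀ {Z : E} (c c' : Z ⟶ C) (x : Z ⟶ X),
    lift c x ≫ uncurry s = tru t Z → lift c' x ≫ uncurry s = tru t Z → c = c'

include classify in
lemma sv_iff {X : E} (s : X ⟶ C ⟹ Ω) :
    s ≫ sgm t classify C = s ≫ tau t classify C ↔ SV t C s := by
  constructor
  · intro h Z c c' x h1 h2
    have := congrArg (fun m => lift (lift c c') x ≫ uncurry m) h
    simp only [lift_uncurry_comp] at this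
    rw [sgm, tau, uncurry_curry, uncurry_curry, lift_F1, lift_F2, lift_F1] at this
    have h1' : lift c (x ≫ s) ≫ uncurry (𝟙 _) = tru t Z := by
      rw [← lift_uncurry]; exact h1
    have h2' : lift c' (x ≫ s) ≫ uncurry (𝟙 _) = tru t Z := by
      rw [← lift_uncurry]; exact h2
    rw [h1', h2'] at this
    have hand : lift (tru t Z) (tru t Z) ≫ andP t classify = tru t Z :=
      (andP_iff t classify _ _).mpr ⟨rfl, rfl⟩
    rw [hand] at this
    have := (andP_iff t classify _ _).mp this.symm
    exact (eqP_iff t classify c c').mp this.2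
  · intro hsv
    apply uncurry_injective
    apply omega_ext t classify
    intro Z e
    have he : e = lift (lift (e ≫ fst _ _ ≫ fst _ _) (e ≫ fst _ _ ≫ snd _ _)) (e ≫ snd _ _) := by
      apply CartesianMonoidalCategory.hom_ext
      · rw [lift_fst]; apply CartesianMonoidalCategory.hom_ext <;> simp
      · simp
    set c := e ≫ fst _ _ ≫ fst _ _
    set c' := e ≫ fst _ _ ≫ snd _ _
    set x := e ≫ snd _ _
    rw [he]
    rw [lift_uncurry_comp, lift_uncurry_comp, sgm, tau, uncurry_curry, uncurry_curry,
      lift_F1, lift_F2, lift_F1]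
    rw [andP_iff, andP_iff]
    constructor
    · rintro ⟨hc, hc'⟩
      refine ⟨(andP_iff t classify _ _).mpr ⟨hc, hc'⟩, ?_⟩
      rw [eqP_iff]
      exact hsv c c' x (by rwa [lift_uncurry]) (by rwa [lift_uncurry])
    · rintro ⟨hcc, _⟩
      exact (andP_iff t classify _ _).mp hcc

/-- The object of "partial elements" of `C`. -/
abbrev Tl : E := equalizer (sgm t classify C) (tau t classify C)

def tlι : Tl t classify C ⟶ (C ⟹ Ω) := equalizer.ι _ _

instance : Mono (tlι t classify C) := by unfold tlι; infer_instance

def mkT {X : E} (s : X ⟶ C ⟹ Ω) (hs : SV t C s) : X ⟶ Tl t classify C :=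
  equalizer.lift s ((sv_iff t classify C s).mpr hs)

@[simp] lemma mkT_ι {X : E} (s : X ⟶ C ⟹ Ω) (hs : SV t C s) :
    mkT t classify C s hs ≫ tlι t classify C = s := equalizer.lift_ι _ _

lemma tl_sv {X : E} (ξ : X ⟶ Tl t classify C) : SV t C (ξ ≫ tlι t classify C) := by
  rw [← sv_iff t classify C, Category.assoc, Category.assoc, tlι, equalizer.condition]

lemma sv_eq : SV t C (curry (eqP t classify C)) := by
  intro Z c c' x h1 h2
  rw [uncurry_curry, eqP_iff] at h1 h2
  rw [h1, h2]

/-- The "singleton" map `C ⟶ C̃`. -/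
def ηT : C ⟶ Tl t classify C :=
  mkT t classify C (curry (eqP t classify C)) (sv_eq t classify C)

@[simp] lemma ηT_ι : ηT t classify C ≫ tlι t classify C = curry (eqP t classify C) :=
  equalizer.lift_ι _ _

end PMC


section PMC2
variable [MonoidalClosed E]
open CartesianClosed MonoidalClosed

variable (C : E)

/-- Master lemma: a generalized element `c` is related to `x` under (the relation of)
`ξ : X ⟶ C̃` iff `η ∘ c = ξ ∘ x`. -/
lemma mem_rel_iff {X Z : E} (ξ : X ⟶ Tl t classify C) (c : Z ⟶ C) (x : Z ⟶ X) :
    lift c x ≫ uncurry (ξ ≫ tlι t classify C) = tru t Z ↔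
      c ≫ ηT t classify C = x ≫ ξ := by
  constructor
  · intro hsat
    have key : x ≫ ξ ≫ tlι t classify C = c ≫ curry (eqP t classify C) := by
      apply uncurry_injective
      apply omega_ext t classify
      intro Z' e
      have he : e = lift (e ≫ fst _ _) (e ≫ snd _ _) := by
        apply CartesianMonoidalCategory.hom_ext <;> simp
      set c'' := e ≫ fst _ _ with hc''
      set z := e ≫ snd _ _ with hz
      have hzc : lift (z ≫ c) (z ≫ x) ≫ uncurry (ξ ≫ tlι t classify C) = tru t Z' := by
        rw [← comp_tru t z, ← hsat, ← Category.assoc, comp_lift]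
      rw [he, lift_uncurry_comp c'' z x (ξ ≫ tlι t classify C),
        lift_uncurry_comp c'' z c (curry (eqP t classify C)), uncurry_curry,
        eqP_iff]
      constructor
      · intro h1
        exact tl_sv t classify C ξ c'' (z ≫ c) (z ≫ x) h1 hzc
      · intro h1
        rw [h1]; exact hzc
    have key' : x ≫ ξ ≫ tlι t classify C = c ≫ ηT t classify C ≫ tlι t classify C := by
      rw [key, ηT_ι]
    rw [← Category.assoc, ← Category.assoc] at key'
    exact ((cancel_mono (tlι t classify C)).mp key').symm
  · intro h
    have hx : x ≫ ξ ≫ tlι t classify C = c ≫ curry (eqP t classify C) := by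
      rw [← Category.assoc, ← h, Category.assoc, ηT_ι]
    rw [lift_uncurry, hx, ← lift_uncurry, uncurry_curry, eqP_iff]

lemma mono_ηT : Mono (ηT t classify C) := by
  have hmc : Mono (curry (eqP t classify C)) := by
    constructor
    intro Z u v huv
    have h0 := congrArg (fun m => lift u (𝟙 Z) ≫ uncurry m) huv
    simp only [lift_uncurry_comp, Category.id_comp, uncurry_curry] at h0
    have h1 : lift u u ≫ eqP t classify C = tru t Z := (eqP_iff t classify u u).mpr rfl
    exact (eqP_iff t classify u v).mp (h0.symm.trans h1)
  exact mono_of_mono_fac (ηT_ι t classify C)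

section pmdef
variable {D X : E} (d : D ⟶ X) (hd : Mono d) (v : D ⟶ C)

include hd in
lemma mono_graph : Mono (lift v d) := by
  haveI := hd
  infer_instance

/-- Classifying map of the graph of the partial map `(d, v)`. -/
def graphχ : C ⊗ X ⟶ Ω := cls t classify (lift v d) (mono_graph C d hd v)

lemma graph_mem {Z : E} (c : Z ⟶ C) (x : Z ⟶ X) :
    lift c x ≫ graphχ t classify C d hd v = tru t Z ↔ ∃ w : Z ⟶ D, w ≫ v = c ∧ w ≫ d = x := by
  rw [graphχ, mem_iff t (cls_spec t classify _ _)]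
  constructor
  · rintro ⟨w, hw⟩
    refine ⟨w, ?_, ?_⟩
    · have := congrArg (fun m => m ≫ fst _ _) hw
      simpa [comp_lift] using this
    · have := congrArg (fun m => m ≫ snd _ _) hw
      simpa [comp_lift] using this
  · rintro ⟨w, hw1, hw2⟩
    exact ⟨w, by rw [comp_lift, hw1, hw2]⟩

lemma sv_graph : SV t C (curry (graphχ t classify C d hd v)) := by
  intro Z c c' x h1 h2
  rw [uncurry_curry, graph_mem] at h1 h2
  obtain ⟨w, hw1, hw2⟩ := h1
  obtain ⟨w', hw1', hw2'⟩ := h2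
  haveI := hd
  have : w = w' := (cancel_mono d).mp (hw2.trans hw2'.symm)
  rw [← hw1, ← hw1', this]

/-- The classifying map `X ⟶ C̃` of a partial map `(d : D ⟶ X, v : D ⟶ C)`. -/
def pm : X ⟶ Tl t classify C :=
  mkT t classify C (curry (graphχ t classify C d hd v)) (sv_graph t classify C d hd v)

@[simp] lemma pm_ι :
    pm t classify C d hd v ≫ tlι t classify C = curry (graphχ t classify C d hd v) :=
  equalizer.lift_ι _ _

lemma pm_mem {Z : E} (c : Z ⟶ C) (x : Z ⟶ X) :
    lift c x ≫ uncurry (pm t classify C d hd v ≫ tlι t classify C) = tru t Z ↔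
      ∃ w : Z ⟶ D, w ≫ v = c ∧ w ≫ d = x := by
  rw [pm_ι, uncurry_curry, graph_mem]

lemma pm_isPullback : IsPullback v d (ηT t classify C) (pm t classify C d hd v) := by
  refine mk_isPullback ?_ ?_
  · exact (mem_rel_iff t classify C _ v d).mp
      ((pm_mem t classify C d hd v v d).mpr ⟨𝟙 D, by simp⟩)
  · intro Z a bx hab
    have hmem := (mem_rel_iff t classify C (pm t classify C d hd v) a bx).mpr hab
    obtain ⟨w, hw1, hw2⟩ := (pm_mem t classify C d hd v a bx).mp hmem
    haveI := hd
    exact ⟨w, ⟨hw1, hw2⟩, fun y hy => (cancel_mono d).mp (hy.2.trans hw2.symm)⟩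

lemma pm_unique {φ' : X ⟶ Tl t classify C}
    (h : IsPullback v d (ηT t classify C) φ') : φ' = pm t classify C d hd v := by
  have key : φ' ≫ tlι t classify C = pm t classify C d hd v ≫ tlι t classify C := by
    apply uncurry_injective
    apply omega_ext t classify
    intro Z e
    have he : e = lift (e ≫ fst _ _) (e ≫ snd _ _) := by
      apply CartesianMonoidalCategory.hom_ext <;> simp
    rw [he, mem_rel_iff t classify C φ' _ _, pm_mem]
    constructor
    · intro h1
      exact ⟨h.lift _ _ h1, h.lift_fst _ _ _, h.lift_snd _ _ _⟩
    · rintro ⟨w, hw1, hw2⟩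
      rw [← hw1, ← hw2, Category.assoc, Category.assoc, h.w]
  exact (cancel_mono (tlι t classify C)).mp key

end pmdef
end PMC2


section PMC3
variable [MonoidalClosed E]
open CartesianClosed MonoidalClosed

variable (C : E)

lemma pm_precomp {D X D' X' : E} (d : D ⟶ X) (hd : Mono d) (v : D ⟶ C)
    {f : X' ⟶ X} {d' : D' ⟶ X'} (hd' : Mono d') {tp : D' ⟶ D}
    (hsq : IsPullback tp d' d f) :
    f ≫ pm t classify C d hd v = pm t classify C d' hd' (tp ≫ v) :=
  pm_unique t classify C d' hd' (tp ≫ v)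
    (hsq.paste_horiz (pm_isPullback t classify C d hd v))

/-- Functoriality of the partial-element object. -/
def tmap {B : E} (γ : C ⟶ B) : Tl t classify C ⟶ Tl t classify B :=
  pm t classify B (ηT t classify C) (mono_ηT t classify C) γ

lemma tmap_isPullback {B : E} (γ : C ⟶ B) :
    IsPullback γ (ηT t classify C) (ηT t classify B) (tmap t classify C γ) :=
  pm_isPullback t classify B (ηT t classify C) (mono_ηT t classify C) γ

lemma pm_tmap {D X B : E} (d : D ⟶ X) (hd : Mono d) (v : D ⟶ C) (γ : C ⟶ B) :
    pm t classify C d hd v ≫ tmap t classify C γ = pm t classify B d hd (v ≫ γ) :=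
  pm_unique t classify B d hd (v ≫ γ)
    ((pm_isPullback t classify C d hd v).paste_horiz (tmap_isPullback t classify C γ))

end PMC3


section Transport

lemma isPullback_iso_apex {D W Cc X T : E} {v' : D ⟶ Cc} {dm : D ⟶ X} {η : Cc ⟶ T} {φ : X ⟶ T}
    (hD : IsPullback v' dm η φ) (j : D ≅ W) {m : W ⟶ X} (hm : Mono m)
    (hjm : j.hom ≫ m = dm) : IsPullback (j.inv ≫ v') m η φ := by
  refine mk_isPullback ?_ ?_
  · rw [Category.assoc, hD.w, ← hjm]
    simp
  · intro Z a bx hab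
    refine ⟨hD.lift a bx hab ≫ j.hom, ⟨?_, ?_⟩, ?_⟩
    · simp
    · rw [Category.assoc, hjm]; simp
    · intro y hy
      haveI := hm
      apply (cancel_mono m).mp
      rw [hy.2, Category.assoc, hjm]; simp

lemma isPullback_top_unique {W Cc X T : E} {k k' : W ⟶ Cc} {m : W ⟶ X} (hm : Mono m)
    {η : Cc ⟶ T} {φ : X ⟶ T}
    (h1 : IsPullback k m η φ) (h2 : IsPullback k' m η φ) : k' = k := by
  haveI := hm
  have hw : h1.lift k' m h2.w ≫ m = 𝟙 W ≫ m := by simp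
  have : h1.lift k' m h2.w = 𝟙 W := (cancel_mono m).mp hw
  have h := h1.lift_fst k' m h2.w
  rw [this, Category.id_comp] at h
  exact h.symm

end Transport

section Slice
variable [MonoidalClosed E]
open CartesianClosed MonoidalClosed

variable (b : E)

/-- The chosen finite products on the slice category. -/
def cfpOver : CartesianMonoidalCategory (Over b) :=
  CartesianMonoidalCategory.ofHasFiniteProducts

attribute [local instance] cfpOver

/-- Binary products in `Over b` are pullbacks in `E`. -/
lemma over_prod_isPullback (A' X' : Over b) :
    IsPullback (fst A' X').left (snd A' X').left A'.hom X'.hom := by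
  refine mk_isPullback ?_ ?_
  · rw [Over.w (fst A' X'), Over.w (snd A' X')]
  · intro Z u w huw
    refine ⟨(lift (Over.homMk u : Over.mk (u ≫ A'.hom) ⟶ A') (Over.homMk w huw.symm)).left,
      ⟨?_, ?_⟩, ?_⟩
    · have := congrArg CommaMorphism.left
        (lift_fst (Over.homMk u : Over.mk (u ≫ A'.hom) ⟶ A') (Over.homMk w huw.symm))
      simpa only [Over.comp_left, Over.homMk_left] using this
    · have := congrArg CommaMorphism.left
        (lift_snd (Over.homMk u : Over.mk (u ≫ A'.hom) ⟶ A') (Over.homMk w huw.symm))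
      simpa only [Over.comp_left, Over.homMk_left] using this
    · intro y hy
      have hyhom : y ≫ (A' ⊗ X').hom = u ≫ A'.hom := by
        rw [← Over.w (fst A' X'), ← Category.assoc, hy.1]
      have h1 : (Over.homMk y hyhom : Over.mk (u ≫ A'.hom) ⟶ A' ⊗ X') =
          lift (Over.homMk u : Over.mk (u ≫ A'.hom) ⟶ A') (Over.homMk w huw.symm) := by
        apply CartesianMonoidalCategory.hom_ext
        · apply Over.OverMorphism.ext; simpa using hy.1
        · apply Over.OverMorphism.ext; simpa using hy.2
      exact congrArg CommaMorphism.left h1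

/-- The canonical mono from the slice product into the ambient product. -/
def mW (A' X' : Over b) : (A' ⊗ X').left ⟶ A'.left ⊗ X'.left :=
  lift (fst A' X').left (snd A' X').left

lemma mono_mW (A' X' : Over b) : Mono (mW b A' X') := by
  constructor
  intro Z z₁ z₂ h
  have h1 : z₁ ≫ (fst A' X').left = z₂ ≫ (fst A' X').left := by
    have := congrArg (fun m => m ≫ CartesianMonoidalCategory.fst A'.left X'.left) h
    simpa [mW] using this
  have h2 : z₁ ≫ (snd A' X').left = z₂ ≫ (snd A' X').left := by
    have := congrArg (fun m => m ≫ CartesianMonoidalCategory.snd A'.left X'.left) h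
    simpa [mW] using this
  exact (over_prod_isPullback b A' X').hom_ext h1 h2

variable (A' : Over b)

def dGr : A'.left ⟶ A'.left ⊗ b := lift (𝟙 _) A'.hom

lemma mono_dGr : Mono (dGr b A') := by unfold dGr; infer_instance

/-- The partial map classifying the "generic point over `b`". -/
def psi : A'.left ⊗ b ⟶ Tl t classify b :=
  pm t classify b (dGr b A') (mono_dGr b A') A'.hom

def h1m : b ⟶ (A'.left ⟹ Tl t classify b) := curry (psi t classify b A')

def h2m (Y' : Over b) :
    (A'.left ⟹ Tl t classify Y'.left) ⟶ (A'.left ⟹ Tl t classify b) :=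
  (ihom A'.left).map (tmap t classify Y'.left Y'.hom)

/-- The underlying object of the exponential in the slice. -/
def expObj (Y' : Over b) : E :=
  pullback (h2m t classify b A' Y') (h1m t classify b A')

/-- The exponential object in the slice. -/
abbrev expP (Y' : Over b) : Over b :=
  Over.mk (pullback.snd (h2m t classify b A' Y') (h1m t classify b A'))

lemma sqW (X' : Over b) :
    IsPullback (fst A' X').left (mW b A' X') (dGr b A') (A'.left ◁ X'.hom) := by
  have hW := over_prod_isPullback b A' X'
  refine mk_isPullback ?_ ?_
  · rw [dGr, mW, lift_whisker]
    rw [comp_lift, Category.comp_id, hW.w]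
  · intro Z a e hae
    have h1 : a = e ≫ CartesianMonoidalCategory.fst _ _ := by
      have := congrArg (fun m => m ≫ CartesianMonoidalCategory.fst A'.left b) hae
      simpa [dGr] using this
    have h2 : a ≫ A'.hom = (e ≫ CartesianMonoidalCategory.snd _ _) ≫ X'.hom := by
      have := congrArg (fun m => m ≫ CartesianMonoidalCategory.snd A'.left b) hae
      simpa [dGr] using this
    refine ⟨hW.lift a (e ≫ CartesianMonoidalCategory.snd _ _) h2, ⟨hW.lift_fst _ _ _, ?_⟩, ?_⟩
    · rw [mW, comp_lift, hW.lift_fst, hW.lift_snd]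
      apply CartesianMonoidalCategory.hom_ext <;> simp [h1]
    · intro y hy
      haveI := mono_mW b A' X'
      apply (cancel_mono (mW b A' X')).mp
      rw [hy.2, mW, comp_lift, hW.lift_fst, hW.lift_snd]
      apply CartesianMonoidalCategory.hom_ext <;> simp [h1]

lemma hPsiX (X' : Over b) :
    IsPullback ((fst A' X').left ≫ A'.hom) (mW b A' X') (ηT t classify b)
      ((A'.left ◁ X'.hom) ≫ psi t classify b A') :=
  (sqW b A' X').paste_horiz (pm_isPullback t classify b (dGr b A') (mono_dGr b A') A'.hom)

section FwdBwd
variable {X' Y' : Over b}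

/-- Classifying map associated to a morphism `A' ⊗ X' ⟶ Y'` over `b`. -/
def phiOf (κ : A' ⊗ X' ⟶ Y') : A'.left ⊗ X'.left ⟶ Tl t classify Y'.left :=
  pm t classify Y'.left (mW b A' X') (mono_mW b A' X') κ.left

lemma fwd_comm (κ : A' ⊗ X' ⟶ Y') :
    curry (phiOf t classify b A' κ) ≫ h2m t classify b A' Y' = X'.hom ≫ h1m t classify b A' := by
  unfold h2m h1m
  rw [← curry_natural_right, ← curry_natural_left]
  congr 1
  rw [phiOf, pm_tmap]
  have hk : κ.left ≫ Y'.hom = (fst A' X').left ≫ A'.hom := by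
    rw [Over.w κ, Over.w (fst A' X')]
  rw [hk]
  exact (pm_unique t classify b (mW b A' X') (mono_mW b A' X') _ (hPsiX t classify b A' X')).symm

/-- Forward direction of the exponential adjunction bijection. -/
def fwd (κ : A' ⊗ X' ⟶ Y') : X' ⟶ expP t classify b A' Y' :=
  Over.homMk (pullback.lift (curry (phiOf t classify b A' κ)) X'.hom
    (fwd_comm t classify b A' κ)) (by simp [expP]; erw [pullback.lift_snd])

/-- The relation associated to a morphism into the exponential. -/
def phiOf' (μ : X' ⟶ expP t classify b A' Y') : A'.left ⊗ X'.left ⟶ Tl t classify Y'.left :=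
  uncurry (μ.left ≫ pullback.fst (h2m t classify b A' Y') (h1m t classify b A'))

lemma bwd_cond (μ : X' ⟶ expP t classify b A' Y') :
    phiOf' t classify b A' μ ≫ tmap t classify Y'.left Y'.hom =
      (A'.left ◁ X'.hom) ≫ psi t classify b A' := by
  have hcond := pullback.condition (f := h2m t classify b A' Y') (g := h1m t classify b A')
  have h0 : μ.left ≫ pullback.snd (h2m t classify b A' Y') (h1m t classify b A') = X'.hom :=
    Over.w μ
  have h1 : (μ.left ≫ pullback.fst (h2m t classify b A' Y') (h1m t classify b A')) ≫
      h2m t classify b A' Y' = X'.hom ≫ h1m t classify b A' := by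
    rw [Category.assoc, hcond, ← Category.assoc, h0]
  calc phiOf' t classify b A' μ ≫ tmap t classify Y'.left Y'.hom
      = uncurry ((μ.left ≫ pullback.fst (h2m t classify b A' Y') (h1m t classify b A')) ≫
          h2m t classify b A' Y') := by
        rw [phiOf']
        unfold h2m
        rw [uncurry_natural_right]
    _ = uncurry (X'.hom ≫ h1m t classify b A') := by rw [h1]
    _ = (A'.left ◁ X'.hom) ≫ psi t classify b A' := by
        unfold h1m
        rw [uncurry_natural_left, uncurry_curry]

lemma bwd_pb (μ : X' ⟶ expP t classify b A' Y') :
    IsPullback (pullback.fst (ηT t classify Y'.left) (phiOf' t classify b A' μ) ≫ Y'.hom)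
      (pullback.snd (ηT t classify Y'.left) (phiOf' t classify b A' μ))
      (ηT t classify b) ((A'.left ◁ X'.hom) ≫ psi t classify b A') := by
  have := (IsPullback.of_hasPullback (ηT t classify Y'.left)
    (phiOf' t classify b A' μ)).paste_horiz (tmap_isPullback t classify Y'.left Y'.hom)
  rwa [bwd_cond] at this

/-- Comparison iso between the two pullbacks of `η_b`. -/
def bwdIso (μ : X' ⟶ expP t classify b A' Y') :
    pullback (ηT t classify Y'.left) (phiOf' t classify b A' μ) ≅ (A' ⊗ X').left :=
  (bwd_pb t classify b A' μ).isoIsPullback _ _ (hPsiX t classify b A' X')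

lemma bwdIso_hom_fst (μ : X' ⟶ expP t classify b A' Y') :
    (bwdIso t classify b A' μ).hom ≫ ((fst A' X').left ≫ A'.hom) =
      pullback.fst (ηT t classify Y'.left) (phiOf' t classify b A' μ) ≫ Y'.hom := by
  rw [bwdIso]
  exact IsPullback.isoIsPullback_hom_fst _ _ _ _

lemma bwdIso_hom_snd (μ : X' ⟶ expP t classify b A' Y') :
    (bwdIso t classify b A' μ).hom ≫ mW b A' X' =
      pullback.snd (ηT t classify Y'.left) (phiOf' t classify b A' μ) := by
  rw [bwdIso]
  exact IsPullback.isoIsPullback_hom_snd _ _ _ _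

lemma bwd_sq (μ : X' ⟶ expP t classify b A' Y') :
    IsPullback ((bwdIso t classify b A' μ).inv ≫
        pullback.fst (ηT t classify Y'.left) (phiOf' t classify b A' μ))
      (mW b A' X') (ηT t classify Y'.left) (phiOf' t classify b A' μ) :=
  isPullback_iso_apex (IsPullback.of_hasPullback _ _) (bwdIso t classify b A' μ)
    (mono_mW b A' X')
    (bwdIso_hom_snd t classify b A' μ)

/-- Backward direction of the exponential adjunction bijection. -/
def bwd (μ : X' ⟶ expP t classify b A' Y') : A' ⊗ X' ⟶ Y' :=
  Over.homMk ((bwdIso t classify b A' μ).inv ≫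
      pullback.fst (ηT t classify Y'.left) (phiOf' t classify b A' μ))
    (by
      rw [Category.assoc, ← bwdIso_hom_fst t classify b A' μ, ← Category.assoc,
        Iso.inv_hom_id, Category.id_comp, Over.w (fst A' X')])

lemma bwd_fwd (κ : A' ⊗ X' ⟶ Y') : bwd t classify b A' (fwd t classify b A' κ) = κ := by
  apply Over.OverMorphism.ext
  have hfst : (fwd t classify b A' κ).left ≫
      pullback.fst (h2m t classify b A' Y') (h1m t classify b A') =
      curry (phiOf t classify b A' κ) := by
    simp [fwd]; erw [pullback.lift_fst]
  have hphi : phiOf' t classify b A' (fwd t classify b A' κ) = phiOf t classify b A' κ := by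
    rw [phiOf', hfst, uncurry_curry]
  have h1 : IsPullback κ.left (mW b A' X') (ηT t classify Y'.left)
      (phiOf' t classify b A' (fwd t classify b A' κ)) := by
    rw [hphi]
    exact pm_isPullback t classify Y'.left (mW b A' X') (mono_mW b A' X') κ.left
  exact isPullback_top_unique (mono_mW b A' X') h1 (bwd_sq t classify b A' (fwd t classify b A' κ))

lemma fwd_bwd (μ : X' ⟶ expP t classify b A' Y') : fwd t classify b A' (bwd t classify b A' μ) = μ := by
  apply Over.OverMorphism.ext
  apply pullback.hom_ext
  · have hlift : (fwd t classify b A' (bwd t classify b A' μ)).left ≫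
        pullback.fst (h2m t classify b A' Y') (h1m t classify b A') =
        curry (phiOf t classify b A' (bwd t classify b A' μ)) := by
      simp [fwd]; erw [pullback.lift_fst]
    rw [hlift]
    have hk : phiOf t classify b A' (bwd t classify b A' μ) = phiOf' t classify b A' μ := by
      rw [phiOf]
      have hbl : (bwd t classify b A' μ).left = (bwdIso t classify b A' μ).inv ≫
          pullback.fst (ηT t classify Y'.left) (phiOf' t classify b A' μ) := by
        simp [bwd]
      rw [hbl]
      exact (pm_unique t classify Y'.left (mW b A' X') (mono_mW b A' X') _
        (bwd_sq t classify b A' μ)).symm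
    rw [hk, phiOf', curry_uncurry]
  · have h1 : (fwd t classify b A' (bwd t classify b A' μ)).left ≫
        pullback.snd (h2m t classify b A' Y') (h1m t classify b A') = X'.hom := by
      simp [fwd]; erw [pullback.lift_snd]
    rw [h1]
    exact (Over.w μ).symm

lemma fwd_natural {X'' : Over b} (ρ : X'' ⟶ X') (κ : A' ⊗ X' ⟶ Y') :
    fwd t classify b A' ((A' ◁ ρ) ≫ κ) = ρ ≫ fwd t classify b A' κ := by
  have hW'' := over_prod_isPullback b A' X''
  have hsq : IsPullback (A' ◁ ρ).left (mW b A' X'') (mW b A' X') (A'.left ◁ ρ.left) := by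
    refine mk_isPullback ?_ ?_
    · rw [mW, mW, lift_whisker, comp_lift]
      congr 1
      · have := congrArg CommaMorphism.left (whiskerLeft_fst A' ρ)
        simpa only [Over.comp_left] using this
      · have := congrArg CommaMorphism.left (whiskerLeft_snd A' ρ)
        simpa only [Over.comp_left] using this
    · intro Z z₁ e hze
      have c1 : z₁ ≫ (fst A' X').left = e ≫ CartesianMonoidalCategory.fst _ _ := by
        have := congrArg (fun m => m ≫ CartesianMonoidalCategory.fst A'.left X'.left) hze
        simpa [mW] using this
      have c2 : z₁ ≫ (snd A' X').left = e ≫ CartesianMonoidalCategory.snd _ _ ≫ ρ.left := by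
        have := congrArg (fun m => m ≫ CartesianMonoidalCategory.snd A'.left X'.left) hze
        simpa [mW] using this
      have hcond : (e ≫ CartesianMonoidalCategory.fst _ _) ≫ A'.hom =
          (e ≫ CartesianMonoidalCategory.snd _ _) ≫ X''.hom := by
        rw [← c1, Category.assoc, Over.w (fst A' X'), ← Over.w (snd A' X'),
          ← Category.assoc]
        rw [c2, ← Over.w ρ]
        simp
      refine ⟨hW''.lift (e ≫ CartesianMonoidalCategory.fst _ _) (e ≫ CartesianMonoidalCategory.snd _ _)
        hcond, ⟨?_, ?_⟩, ?_⟩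
      · apply (over_prod_isPullback b A' X').hom_ext
        · have hl : (A' ◁ ρ).left ≫ (fst A' X').left = (fst A' X'').left := by
            have := congrArg CommaMorphism.left (whiskerLeft_fst A' ρ)
            simpa only [Over.comp_left] using this
          rw [Category.assoc, hl, hW''.lift_fst, c1]
        · have hl : (A' ◁ ρ).left ≫ (snd A' X').left = (snd A' X'').left ≫ ρ.left := by
            have := congrArg CommaMorphism.left (whiskerLeft_snd A' ρ)
            simpa only [Over.comp_left] using this
          rw [Category.assoc, hl, ← Category.assoc, hW''.lift_snd, c2, Category.assoc]
      · rw [mW, comp_lift, hW''.lift_fst, hW''.lift_snd]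
        apply CartesianMonoidalCategory.hom_ext <;> simp
      · intro y hy
        haveI := mono_mW b A' X''
        apply (cancel_mono (mW b A' X'')).mp
        rw [hy.2, mW, comp_lift, hW''.lift_fst, hW''.lift_snd]
        apply CartesianMonoidalCategory.hom_ext <;> simp
  apply Over.OverMorphism.ext
  apply pullback.hom_ext
  · have h1 : (fwd t classify b A' ((A' ◁ ρ) ≫ κ)).left ≫ pullback.fst _ _ =
        curry (phiOf t classify b A' ((A' ◁ ρ) ≫ κ)) := by simp [fwd]; erw [pullback.lift_fst]
    have h2 : (ρ ≫ fwd t classify b A' κ).left ≫ pullback.fst _ _ =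
        ρ.left ≫ curry (phiOf t classify b A' κ) := by simp [fwd]; erw [pullback.lift_fst]
    rw [h1, h2, ← curry_natural_left]
    congr 1
    rw [phiOf, phiOf, pm_precomp t classify Y'.left (mW b A' X') (mono_mW b A' X') κ.left
      (mono_mW b A' X'') hsq]
    rfl
  · have h1 : (fwd t classify b A' ((A' ◁ ρ) ≫ κ)).left ≫ pullback.snd _ _ = X''.hom := by
      simp [fwd]; erw [pullback.lift_snd]
    have h2 : (ρ ≫ fwd t classify b A' κ).left ≫ pullback.snd _ _ = ρ.left ≫ X'.hom := by
      simp [fwd]; erw [pullback.lift_snd]; exact Over.w ρ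
    rw [h1, h2, Over.w ρ]

end FwdBwd

/-- The slice category is cartesian closed. -/
def overCCC : MonoidalClosed (Over b) where
  closed A' := Closed.mk
    (Adjunction.rightAdjointOfEquiv
      (fun X' Y' => ⟨fwd t classify b A', bwd t classify b A',
        fun κ => bwd_fwd t classify b A' κ, fun μ => fwd_bwd t classify b A' μ⟩)
      (fun X'' X' Y' ρ g => fwd_natural t classify b A' ρ g))
    (Adjunction.adjunctionOfEquivRight _ _)

end Slice


section SliceClassifier
variable (b : E) (δ : b ⊗ b ⟶ Ω) (hδ : IsPullback (toUnit b) (lift (𝟙 b) (𝟙 b)) t δ)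

include hδ in
lemma diag_tru {Z : E} (u : Z ⟶ b) : lift u u ≫ δ = tru t Z :=
  (mem_iff t hδ _).mpr ⟨u, by simp [comp_lift]⟩

lemma diag_comp {Z : E} (u : Z ⟶ b) : u ≫ lift (𝟙 b) (𝟙 b) = lift u u := by
  simp [comp_lift]

include hδ in
lemma dd_fst {Z : E} (u : Z ⟶ b) :
    u ≫ (lift (lift (𝟙 b) (𝟙 b) ≫ δ) (𝟙 b)) ≫ CartesianMonoidalCategory.fst Ω b = tru t Z := by
  rw [lift_fst, ← Category.assoc, diag_comp, diag_tru t b δ hδ]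

lemma dd_snd {Z : E} (u : Z ⟶ b) :
    u ≫ (lift (lift (𝟙 b) (𝟙 b) ≫ δ) (𝟙 b)) ≫ CartesianMonoidalCategory.snd Ω b = u := by
  rw [lift_snd, Category.comp_id]

include classify hδ in
lemma slice_classify {A B : Over b} (m : A ⟶ B) (hm : Mono m) :
    ∃! χ : B ⟶ Over.mk (CartesianMonoidalCategory.snd Ω b),
      IsPullback (Over.homMk A.hom : A ⟶ Over.mk (𝟙 b)) m
        (Over.homMk (lift (lift (𝟙 b) (𝟙 b) ≫ δ) (𝟙 b)) :
          Over.mk (𝟙 b) ⟶ Over.mk (CartesianMonoidalCategory.snd Ω b)) χ := by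
  haveI := hm
  haveI hml : Mono m.left := inferInstance
  set χ₀ := cls t classify m.left hml with hχ₀def
  have hχ₀ : IsPullback (toUnit A.left) m.left t χ₀ := cls_spec t classify m.left hml
  have hmem : m.left ≫ χ₀ = tru t A.left :=
    (mem_iff t hχ₀ m.left).mpr ⟨𝟙 _, Category.id_comp _⟩
  refine ⟨Over.homMk (lift χ₀ B.hom) (by simp), ?_, ?_⟩
  · refine mk_isPullback ?_ ?_
    · apply Over.OverMorphism.ext
      simp only [Over.comp_left, Over.homMk_left]
      apply CartesianMonoidalCategory.hom_ext
      · rw [Category.assoc, Category.assoc, dd_fst t b δ hδ, lift_fst, hmem]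
      · rw [Category.assoc, Category.assoc, dd_snd b δ, lift_snd, Over.w m]
    · intro Z' a v hav
      have haleft : a.left = Z'.hom := by
        have := Over.w a
        simpa using this
      have havl := congrArg CommaMorphism.left hav
      simp only [Over.comp_left, Over.homMk_left] at havl
      have hfst := congrArg (fun q => q ≫ CartesianMonoidalCategory.fst Ω b) havl
      simp only [Category.assoc] at hfst
      rw [dd_fst t b δ hδ, lift_fst] at hfst
      have hvtru : v.left ≫ χ₀ = tru t Z'.left := hfst.symm
      obtain ⟨w₀, hw₀⟩ := (mem_iff t hχ₀ v.left).mp hvtru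
      have hwover : w₀ ≫ A.hom = Z'.hom := by
        rw [← Over.w m, ← Category.assoc, hw₀, Over.w v]
      refine ⟨Over.homMk w₀ hwover, ⟨?_, ?_⟩, ?_⟩
      · apply Over.OverMorphism.ext
        simp only [Over.comp_left, Over.homMk_left]
        rw [hwover, haleft]
      · apply Over.OverMorphism.ext
        simp only [Over.comp_left, Over.homMk_left]
        exact hw₀
      · intro y hy
        apply (cancel_mono m).mp
        rw [hy.2]
        apply Over.OverMorphism.ext
        simp only [Over.comp_left, Over.homMk_left]
        exact hw₀.symm
  · intro χ' hsq
    apply Over.OverMorphism.ext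
    apply CartesianMonoidalCategory.hom_ext
    · have key : IsPullback (toUnit A.left) m.left t (χ'.left ≫ CartesianMonoidalCategory.fst Ω b) := by
        refine mk_isPullback ?_ ?_
        · have hw := congrArg CommaMorphism.left hsq.w
          simp only [Over.comp_left, Over.homMk_left] at hw
          rw [← Category.assoc, ← hw, Category.assoc, dd_fst t b δ hδ]
          rfl
        · intro Z a v hav
          have havtru : v ≫ χ'.left ≫ CartesianMonoidalCategory.fst Ω b = tru t Z := by
            rw [← hav, show a = toUnit Z from toUnit_unique _ _]; rfl
          have hχ'snd : χ'.left ≫ CartesianMonoidalCategory.snd Ω b = B.hom := by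
            have := Over.w χ'
            simpa using this
          have haz : (Over.homMk (v ≫ B.hom) (Category.comp_id _) :
              Over.mk (v ≫ B.hom) ⟶ Over.mk (𝟙 b)) ≫
              (Over.homMk (lift (lift (𝟙 b) (𝟙 b) ≫ δ) (𝟙 b)) :
                Over.mk (𝟙 b) ⟶ Over.mk (CartesianMonoidalCategory.snd Ω b)) =
              (Over.homMk v rfl : Over.mk (v ≫ B.hom) ⟶ B) ≫ χ' := by
            apply Over.OverMorphism.ext
            simp only [Over.comp_left, Over.homMk_left]
            apply CartesianMonoidalCategory.hom_ext
            · rw [Category.assoc, dd_fst t b δ hδ, Category.assoc, havtru]; rfl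
            · rw [Category.assoc, dd_snd b δ, Category.assoc, hχ'snd]
          refine ⟨(hsq.lift _ _ haz).left, ⟨toUnit_unique _ _, ?_⟩, ?_⟩
          · have := congrArg CommaMorphism.left (hsq.lift_snd _ _ haz)
            simpa only [Over.comp_left, Over.homMk_left] using this
          · intro y hy
            apply (cancel_mono m.left).mp
            rw [hy.2]
            have := congrArg CommaMorphism.left (hsq.lift_snd _ _ haz)
            simp only [Over.comp_left, Over.homMk_left] at this
            rw [this]
      have h1 : χ'.left ≫ CartesianMonoidalCategory.fst Ω b = χ₀ := cls_unique t classify m.left hml key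
      simp only [Over.homMk_left]
      rw [h1, lift_fst]
    · have hl := Over.w χ'
      simp only [Over.mk_hom] at hl
      simp only [Over.homMk_left]
      rw [hl, lift_snd]
end SliceClassifier

end Classifier
end ToposSlice

/-- For any object `b` of an elementary topos `E`, the slice `E/b` is cartesian closed;
moreover it is an elementary topos, with terminal object `𝟙 b` and subobject classifier
the projection `Ω ⊗ b ⟶ b` with classifying point `⟨δ_b ∘ Δ_b, 𝟙 b⟩`. -/
theorem stmt_19 {E : Type*} [Category E] [HasFiniteLimits E] [CartesianMonoidalCategory E]
    [MonoidalClosed E] [HasFiniteColimits E]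
    (Ω : E) (t : 𝟙_ E ⟶ Ω)
    (classify : ∀ {x y : E} (m : x ⟶ y), Mono m →
      ∃! χ : y ⟶ Ω, IsPullback (toUnit x) m t χ)
    (b : E) (δ : b ⊗ b ⟶ Ω)
    (hδ : IsPullback (toUnit b) (lift (𝟙 b) (𝟙 b)) t δ) :
    (∃ _ : CartesianMonoidalCategory (Over b), Nonempty (MonoidalClosed (Over b))) ∧
    Nonempty (IsTerminal (Over.mk (𝟙 b))) ∧
    (∀ {A B : Over b} (m : A ⟶ B), Mono m →
      ∃! χ : B ⟶ Over.mk (snd Ω b),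
        IsPullback (Over.homMk A.hom : A ⟶ Over.mk (𝟙 b)) m
          (Over.homMk (lift (lift (𝟙 b) (𝟙 b) ≫ δ) (𝟙 b)) :
            Over.mk (𝟙 b) ⟶ Over.mk (snd Ω b)) χ) := by
  refine ⟨⟨ToposSlice.cfpOver b, ⟨ToposSlice.overCCC t classify b⟩⟩, ⟨Over.mkIdTerminal⟩, ?_⟩
  intro A B m hm
  exact ToposSlice.slice_classify t classify b δ hδ m hm
end
end
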